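/- For every h ∈ ℂ, the super-Jordanian R-matrix in the fundamental ⊗ fundamental representation factorizes as R_h = exp(−h · e₁ ⊗ (T h₁)) · exp(h · (T h₁) ⊗ e₁) · D, where e₁ = E₁₂, h₁ = diag(1,−1,0), T = I₃ + h e₁, and D = diag(1,1,1,1,1,1,1,1,−1) is the 9×9 grading sign matrix. (This instantiates Proposition 4, R_h = exp(−h X₁ ⊗ T H₁) exp(h T H₁ ⊗ X₁) with X₁ = h⁻¹ ln T, in the fundamental representation, where ln T = h e₁ since e₁² = 0.) -/

import Mathlib

noncomputable section

namespace SuperJordanian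

open Matrix
open scoped Kronecker

/-- The super-Jordanian `R_h`-matrix in the fundamental ⊗ fundamental representation:
the identity except `(R_h)₁₂ = h`, `(R_h)₁₄ = −h`, `(R_h)₁₅ = h²`, `(R_h)₂₅ = h`,
`(R_h)₄₅ = −h`, `(R_h)₉₉ = −1`. -/
def Rh (h : ℂ) : Matrix (Fin 3 × Fin 3) (Fin 3 × Fin 3) ℂ := fun p r =>
  if p = r then (if p = (2, 2) then -1 else 1)
  else if p = (0, 0) ∧ r = (0, 1) then h
  else if p = (0, 0) ∧ r = (1, 0) then -h
  else if p = (0, 0) ∧ r = (1, 1) then h ^ 2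
  else if p = (0, 1) ∧ r = (1, 1) then h
  else if p = (1, 0) ∧ r = (1, 1) then -h
  else 0

/-- `e₁ = E₁₂` in the fundamental representation. -/
def e₁ : Matrix (Fin 3) (Fin 3) ℂ := single 0 1 1

/-- `h₁ = diag(1, −1, 0)` in the fundamental representation. -/
def h₁ : Matrix (Fin 3) (Fin 3) ℂ := diagonal ![1, -1, 0]

/-- `T = I₃ + h e₁` in the fundamental representation. -/
def T (h : ℂ) : Matrix (Fin 3) (Fin 3) ℂ := 1 + h • e₁

/-- The 9×9 grading sign matrix `D = diag(1,1,1,1,1,1,1,1,−1)`. -/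
def D : Matrix (Fin 3 × Fin 3) (Fin 3 × Fin 3) ℂ :=
  diagonal fun p => if p = (2, 2) then -1 else 1


lemma e₁_eq : e₁ = !![0,1,0;0,0,0;0,0,0] := by
  ext a b; fin_cases a <;> fin_cases b <;>
    simp [e₁, Matrix.single, Matrix.vecHead, Matrix.vecTail]

lemma M_eq (h : ℂ) : T h * h₁ = !![1,-h,0;0,-1,0;0,0,0] := by
  ext a b
  fin_cases a <;> fin_cases b <;>
    simp [T, h₁, e₁_eq, Matrix.mul_apply, Fin.sum_univ_three, Matrix.one_apply,
      Matrix.vecHead, Matrix.vecTail]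

lemma e₁_sq : e₁ * e₁ = 0 := by
  ext a b
  fin_cases a <;> fin_cases b <;>
    simp [e₁_eq, Matrix.mul_apply, Fin.sum_univ_three, Matrix.vecHead, Matrix.vecTail]

lemma e₁M (h : ℂ) : e₁ * (T h * h₁) = !![0,-1,0;0,0,0;0,0,0] := by
  ext a b
  fin_cases a <;> fin_cases b <;>
    simp [e₁_eq, M_eq, Matrix.mul_apply, Fin.sum_univ_three, Matrix.vecHead, Matrix.vecTail]

lemma Me₁ (h : ℂ) : (T h * h₁) * e₁ = !![0,1,0;0,0,0;0,0,0] := by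
  ext a b
  fin_cases a <;> fin_cases b <;>
    simp [e₁_eq, M_eq, Matrix.mul_apply, Fin.sum_univ_three, Matrix.vecHead, Matrix.vecTail]

lemma exp_sq_zero {A : Matrix (Fin 3 × Fin 3) (Fin 3 × Fin 3) ℂ} (hA : A * A = 0) :
    NormedSpace.exp A = 1 + A := by
  rw [NormedSpace.exp_eq_tsum ℂ]
  have hpow : ∀ n, n ∉ ({0, 1} : Finset ℕ) → (n.factorial⁻¹ : ℂ) • A ^ n = 0 := by
    intro n hn
    simp only [Finset.mem_insert, Finset.mem_singleton] at hn
    have h2 : 2 ≤ n := by omega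
    have : A ^ n = A ^ 2 * A ^ (n - 2) := by
      rw [← pow_add]; congr 1; omega
    rw [this, pow_two, hA, Matrix.zero_mul, smul_zero]
  show (∑' n : ℕ, ((n.factorial : ℂ)⁻¹ • A ^ n)) = 1 + A
  rw [tsum_eq_sum hpow]
  simp [Finset.sum_insert, Nat.factorial]

set_option maxHeartbeats 2000000 in
/-- the factorization
`R_h = exp(−h · e₁ ⊗ (T h₁)) · exp(h · (T h₁) ⊗ e₁) · D`. -/
theorem statement14 (h : ℂ) :
    Rh h = NormedSpace.exp (-(h • (e₁ ⊗ₖ (T h * h₁))))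
        * NormedSpace.exp (h • ((T h * h₁) ⊗ₖ e₁)) * D := by
  have hA : (-(h • (e₁ ⊗ₖ (T h * h₁)))) * (-(h • (e₁ ⊗ₖ (T h * h₁)))) = 0 := by
    rw [neg_mul_neg, Matrix.smul_mul, Matrix.mul_smul, ← Matrix.mul_kronecker_mul, e₁_sq]
    simp
  have hB : (h • ((T h * h₁) ⊗ₖ e₁)) * (h • ((T h * h₁) ⊗ₖ e₁)) = 0 := by
    rw [Matrix.smul_mul, Matrix.mul_smul, ← Matrix.mul_kronecker_mul, e₁_sq]
    simp
  rw [exp_sq_zero hA, exp_sq_zero hB]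
  have hprod : (1 + -(h • (e₁ ⊗ₖ (T h * h₁)))) * (1 + h • ((T h * h₁) ⊗ₖ e₁))
      = 1 + h • ((T h * h₁) ⊗ₖ e₁) - h • (e₁ ⊗ₖ (T h * h₁))
        - (h * h) • ((e₁ * (T h * h₁)) ⊗ₖ ((T h * h₁) * e₁)) := by
    rw [Matrix.mul_kronecker_mul]
    simp only [mul_add, add_mul, Matrix.one_mul, Matrix.mul_one, Matrix.neg_mul,
      Matrix.smul_mul, Matrix.mul_smul, smul_smul, smul_neg, neg_smul]
    abel
  rw [hprod]
  ext ⟨i, j⟩ ⟨k, l⟩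
  rw [show (D : Matrix (Fin 3 × Fin 3) (Fin 3 × Fin 3) ℂ)
      = diagonal fun p => if p = (2,2) then (-1 : ℂ) else 1 from rfl,
    Matrix.mul_diagonal]
  simp only [Matrix.sub_apply, Matrix.add_apply, Matrix.smul_apply, Matrix.one_apply,
    kroneckerMap_apply, M_eq, e₁_eq, e₁M, Me₁, smul_eq_mul, Rh, Prod.mk.injEq]
  fin_cases i <;> fin_cases j <;> fin_cases k <;> fin_cases l <;>
    norm_num [Matrix.vecHead, Matrix.vecTail, Fin.ext_iff, Matrix.cons_val, Matrix.cons_val_two] <;> ring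


end SuperJordanian
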